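/- If v ∈ C^{2+α}_s(𝒪 ∪ Γ₀) for a domain 𝒪 ⊂ ℍ with degenerate boundary portion Γ₀ ⊂ {y=0}, then the function y·D²v, which extends continuously up to Γ₀ by definition of the space, vanishes on Γ₀: (y D²v)(x,0) = 0 for every (x,0) ∈ Γ₀. -/

import Mathlib

noncomputable section
open MeasureTheory Set

/-- The open upper half-plane ℍ = ℝ × (0,∞). -/
def UH : Set (ℝ × ℝ) := {p | 0 < p.2}

/-- Euclidean distance on ℝ². -/
def eDist (p q : ℝ × ℝ) : ℝ := Real.sqrt ((p.1 - q.1) ^ 2 + (p.2 - q.2) ^ 2)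

/-- Open Euclidean ball. -/
def eBall (P : ℝ × ℝ) (r : ℝ) : Set (ℝ × ℝ) := {p | eDist p P < r}

/-- Closed Euclidean ball. -/
def eClosedBall (P : ℝ × ℝ) (r : ℝ) : Set (ℝ × ℝ) := {p | eDist p P ≤ r}

/-- Open half-ball B⁺_r(P) = B_r(P) ∩ ℍ. -/
def halfBall (P : ℝ × ℝ) (r : ℝ) : Set (ℝ × ℝ) := eBall P r ∩ UH

/-- Cycloidal (Daskalopoulos–Hamilton/Koch) distance function. -/
def cyclDist (p q : ℝ × ℝ) : ℝ :=
  (|p.1 - q.1| + |p.2 - q.2|) /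
    (Real.sqrt p.2 + Real.sqrt q.2 + Real.sqrt (|p.1 - q.1| + |p.2 - q.2|))

/-- Partial derivative in x. -/
def dX (f : ℝ × ℝ → ℝ) (p : ℝ × ℝ) : ℝ := fderiv ℝ f p (1, 0)

/-- Partial derivative in y. -/
def dY (f : ℝ × ℝ → ℝ) (p : ℝ × ℝ) : ℝ := fderiv ℝ f p (0, 1)

/-- The (sign-reversed, generator form) Heston operator
`Lu = (y/2)(u_xx + 2ϱσ u_xy + σ² u_yy) + (r - q - y/2) u_x + κ(θ - y) u_y - r u`. -/
def heston (σ ϱ r q κ θ : ℝ) (u : ℝ × ℝ → ℝ) (p : ℝ × ℝ) : ℝ :=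
  p.2 / 2 * (dX (dX u) p + 2 * ϱ * σ * dY (dX u) p + σ ^ 2 * dY (dY u) p)
    + (r - q - p.2 / 2) * dX u p + κ * (θ - p.2) * dY u p - r * u p

/-- The rescaled Heston operator `L_{y₀}`. -/
def hestonY0 (σ ϱ r q κ θ y₀ : ℝ) (v : ℝ × ℝ → ℝ) (p : ℝ × ℝ) : ℝ :=
  (1 + p.2) / 2 * (dX (dX v) p + 2 * ϱ * σ * dY (dX v) p + σ ^ 2 * dY (dY v) p)
    + (r - q - y₀ * (1 + p.2) / 2) * dX v p + κ * (θ - y₀ * (1 + p.2)) * dY v p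
    - r * y₀ * v p

/-- Sup of |f| on a set. -/
def supAbs (S : Set (ℝ × ℝ)) (f : ℝ × ℝ → ℝ) : ℝ := sSup ((fun p => |f p|) '' S)

/-- Euclidean norm of the gradient. -/
def gradNorm (f : ℝ × ℝ → ℝ) (p : ℝ × ℝ) : ℝ := Real.sqrt ((dX f p) ^ 2 + (dY f p) ^ 2)

/-- Frobenius norm of the Hessian. -/
def hess2Norm (f : ℝ × ℝ → ℝ) (p : ℝ × ℝ) : ℝ :=
  Real.sqrt ((dX (dX f) p) ^ 2 + (dX (dY f) p) ^ 2 + (dY (dX f) p) ^ 2 + (dY (dY f) p) ^ 2)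

/-- The `C^{1,1}` norm on a set: sup|f| + sup|Df| + Lip(Df). -/
def C11Norm (S : Set (ℝ × ℝ)) (f : ℝ × ℝ → ℝ) : ℝ :=
  supAbs S f + sSup ((fun p => gradNorm f p) '' S)
    + sSup ((fun pq : (ℝ × ℝ) × (ℝ × ℝ) =>
        Real.sqrt ((dX f pq.1 - dX f pq.2) ^ 2 + (dY f pq.1 - dY f pq.2) ^ 2)
          / eDist pq.1 pq.2) '' {pq ∈ S ×ˢ S | pq.1 ≠ pq.2})

/-- The weighted `C^{1,1}_s` norm: ‖y D²f‖_∞ + ‖Df‖_∞ + ‖f‖_∞. -/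
def C11sNorm (S : Set (ℝ × ℝ)) (f : ℝ × ℝ → ℝ) : ℝ :=
  sSup ((fun p => |p.2| * hess2Norm f p) '' S)
    + sSup ((fun p => gradNorm f p) '' S) + supAbs S f

/-- Membership in the weighted Hölder space `C^α_s(S̄)` (bounded + s-Hölder). -/
def MemCalphaS (α : ℝ) (S : Set (ℝ × ℝ)) (f : ℝ × ℝ → ℝ) : Prop :=
  ContinuousOn f S ∧ ∃ C : ℝ, (∀ p ∈ S, |f p| ≤ C) ∧
    ∀ p ∈ S, ∀ q ∈ S, |f p - f q| ≤ C * (cyclDist p q) ^ α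

/-- Membership in the Daskalopoulos–Hamilton space `C^{2+α}_s(S̄)`. -/
def MemC2alphaS (α : ℝ) (S : Set (ℝ × ℝ)) (f : ℝ × ℝ → ℝ) : Prop :=
  ContDiffOn ℝ 2 f (interior S) ∧ MemCalphaS α S f ∧
    MemCalphaS α S (dX f) ∧ MemCalphaS α S (dY f) ∧
    MemCalphaS α S (fun p => p.2 * dX (dX f) p) ∧
    MemCalphaS α S (fun p => p.2 * dY (dX f) p) ∧
    MemCalphaS α S (fun p => p.2 * dY (dY f) p)

/-- The `C^α_s` norm (sup norm + s-Hölder seminorm). -/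
def CalphaSNorm (α : ℝ) (S : Set (ℝ × ℝ)) (f : ℝ × ℝ → ℝ) : ℝ :=
  supAbs S f + sSup ((fun pq : (ℝ × ℝ) × (ℝ × ℝ) =>
    |f pq.1 - f pq.2| / (cyclDist pq.1 pq.2) ^ α) '' {pq ∈ S ×ˢ S | pq.1 ≠ pq.2})

/-- The `C^{2+α}_s` norm. -/
def C2alphaSNorm (α : ℝ) (S : Set (ℝ × ℝ)) (f : ℝ × ℝ → ℝ) : ℝ :=
  CalphaSNorm α S f + CalphaSNorm α S (dX f) + CalphaSNorm α S (dY f)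
    + CalphaSNorm α S (fun p => p.2 * dX (dX f) p)
    + CalphaSNorm α S (fun p => p.2 * dY (dX f) p)
    + CalphaSNorm α S (fun p => p.2 * dY (dY f) p)

/-- The weight 𝔴(x,y) = y^{β-1} e^{-γ|x| - μ y}, β = 2κθ/σ², μ = 2κ/σ². -/
def hestonWeight (κ θ σ γ : ℝ) (p : ℝ × ℝ) : ℝ :=
  p.2 ^ (2 * κ * θ / σ ^ 2 - 1) * Real.exp (-(γ * |p.1|) - 2 * κ / σ ^ 2 * p.2)

/-- Membership in the weighted Sobolev space H²(V,𝔴). -/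
def MemH2w (κ θ σ γ : ℝ) (V : Set (ℝ × ℝ)) (u : ℝ × ℝ → ℝ) : Prop :=
  IntegrableOn (fun p =>
    (p.2 ^ 2 * (hess2Norm u p) ^ 2 + (1 + p.2) ^ 2 * (gradNorm u p) ^ 2
      + (1 + p.2) * (u p) ^ 2) * hestonWeight κ θ σ γ p) V volume

/-- The a.e. obstacle-problem condition `min{Lu, u - ψ} = 0` a.e. on V, in the
paper's sign convention: Lu ≤ 0, u ≥ ψ, with at least one equality, a.e. -/
def ObstacleAE (Lu u ψ : ℝ × ℝ → ℝ) (V : Set (ℝ × ℝ)) : Prop :=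
  ∀ᵐ p ∂(volume.restrict V), Lu p ≤ 0 ∧ ψ p ≤ u p ∧ (Lu p = 0 ∨ u p = ψ p)

/-- Membership in `C^{1,1}_s(S)`: C¹ on S, C² in the interior, with y·D²f bounded. -/
def MemC11s (S : Set (ℝ × ℝ)) (f : ℝ × ℝ → ℝ) : Prop :=
  ContDiffOn ℝ 1 f S ∧ ContDiffOn ℝ 2 f (interior S) ∧
    ∃ K : ℝ, ∀ p ∈ interior S, |p.2| * hess2Norm f p ≤ K


lemma cyclDist_nonneg' (p q : ℝ × ℝ) : 0 ≤ cyclDist p q := by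
  unfold cyclDist
  apply div_nonneg (by positivity) (by positivity)

lemma cyclDist_le_sqrt (p q : ℝ × ℝ) :
    cyclDist p q ≤ Real.sqrt (|p.1 - q.1| + |p.2 - q.2|) := by
  unfold cyclDist
  set d := |p.1 - q.1| + |p.2 - q.2| with hd
  have hd0 : 0 ≤ d := by positivity
  rcases eq_or_lt_of_le hd0 with h | h
  · rw [← h]; simp [Real.sqrt_nonneg]
  · have hden : Real.sqrt d ≤ Real.sqrt p.2 + Real.sqrt q.2 + Real.sqrt d := by
      have h1 := Real.sqrt_nonneg p.2; have h2 := Real.sqrt_nonneg q.2; linarith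
    have hsd : 0 < Real.sqrt d := Real.sqrt_pos.mpr h
    rw [div_le_iff₀ (lt_of_lt_of_le hsd hden)]
    calc d = Real.sqrt d * Real.sqrt d := (Real.mul_self_sqrt hd0).symm
    _ ≤ Real.sqrt d * (Real.sqrt p.2 + Real.sqrt q.2 + Real.sqrt d) :=
        mul_le_mul_of_nonneg_left hden hsd.le

lemma holder_bound {α : ℝ} (hα : 0 < α) (f : ℝ × ℝ → ℝ) (S : Set (ℝ × ℝ)) (C : ℝ)
    (hH : ∀ p ∈ S, ∀ q ∈ S, |f p - f q| ≤ C * cyclDist p q ^ α)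
    {p q : ℝ × ℝ} (hp : p ∈ S) (hq : q ∈ S) {b : ℝ}
    (hb : |p.1 - q.1| + |p.2 - q.2| ≤ b) :
    |f p - f q| ≤ max C 0 * Real.sqrt b ^ α := by
  have h1 : cyclDist p q ≤ Real.sqrt b :=
    (cyclDist_le_sqrt p q).trans (Real.sqrt_le_sqrt hb)
  have h2 : cyclDist p q ^ α ≤ Real.sqrt b ^ α :=
    Real.rpow_le_rpow (cyclDist_nonneg' p q) h1 hα.le
  calc |f p - f q| ≤ C * cyclDist p q ^ α := hH p hp q hq
    _ ≤ max C 0 * cyclDist p q ^ α :=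
        mul_le_mul_of_nonneg_right (le_max_left _ _) (Real.rpow_nonneg (cyclDist_nonneg' p q) α)
    _ ≤ max C 0 * Real.sqrt b ^ α := mul_le_mul_of_nonneg_left h2 (le_max_right _ _)

lemma deriv_diffAt {v : ℝ × ℝ → ℝ} {𝒪 : Set (ℝ × ℝ)} (hO : IsOpen 𝒪)
    (hv : ContDiffOn ℝ 2 v 𝒪) (w : ℝ × ℝ) :
    ∀ q ∈ 𝒪, DifferentiableAt ℝ (fun p => fderiv ℝ v p w) q := by
  have hF : ContDiffOn ℝ 1 (fun p => fderiv ℝ v p) 𝒪 :=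
    hv.fderiv_of_isOpen hO (by norm_num)
  have h1 : ContDiffOn ℝ 1 (fun p => fderiv ℝ v p w) 𝒪 := hF.clm_apply contDiffOn_const
  intro q hq
  exact (h1.differentiableOn one_ne_zero).differentiableAt (hO.mem_nhds hq)

lemma mvt_horiz {g : ℝ × ℝ → ℝ} {𝒪 : Set (ℝ × ℝ)}
    (hg : ∀ q ∈ 𝒪, DifferentiableAt ℝ g q) {x y : ℝ} (hy : 0 < y)
    (hseg : ∀ t ∈ Icc x (x + y), ((t, y) : ℝ × ℝ) ∈ 𝒪) :
    ∃ t ∈ Ioo x (x + y), dX g (t, y) = (g (x + y, y) - g (x, y)) / y := by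
  have hd : ∀ t ∈ Icc x (x + y), HasDerivAt (fun s => g (s, y)) (dX g (t, y)) t := by
    intro t ht
    have hcv : HasDerivAt (fun s : ℝ => ((s, y) : ℝ × ℝ)) (1, 0) t :=
      HasDerivAt.prodMk (hasDerivAt_id t) (hasDerivAt_const t y)
    have := ((hg _ (hseg t ht)).hasFDerivAt).comp_hasDerivAt t hcv
    exact this
  have hlt : x < x + y := by linarith
  obtain ⟨c, hc, hceq⟩ := exists_hasDerivAt_eq_slope (fun s => g (s, y))
    (fun t => dX g (t, y)) hlt
    (fun t ht => (hd t ht).continuousAt.continuousWithinAt)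
    (fun t ht => hd t (Ioo_subset_Icc_self ht))
  exact ⟨c, hc, by rw [hceq]; congr 1; ring⟩

lemma mvt_vert {g : ℝ × ℝ → ℝ} {𝒪 : Set (ℝ × ℝ)}
    (hg : ∀ q ∈ 𝒪, DifferentiableAt ℝ g q) {x y : ℝ} (hy : 0 < y)
    (hseg : ∀ t ∈ Icc y (2 * y), ((x, t) : ℝ × ℝ) ∈ 𝒪) :
    ∃ t ∈ Ioo y (2 * y), dY g (x, t) = (g (x, 2 * y) - g (x, y)) / y := by
  have hd : ∀ t ∈ Icc y (2 * y), HasDerivAt (fun s => g (x, s)) (dY g (x, t)) t := by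
    intro t ht
    have hcv : HasDerivAt (fun s : ℝ => ((x, s) : ℝ × ℝ)) (0, 1) t :=
      HasDerivAt.prodMk (hasDerivAt_const t x) (hasDerivAt_id t)
    have := ((hg _ (hseg t ht)).hasFDerivAt).comp_hasDerivAt t hcv
    exact this
  have hlt : y < 2 * y := by linarith
  obtain ⟨c, hc, hceq⟩ := exists_hasDerivAt_eq_slope (fun s => g (x, s))
    (fun t => dY g (x, t)) hlt
    (fun t ht => (hd t ht).continuousAt.continuousWithinAt)
    (fun t ht => hd t (Ioo_subset_Icc_self ht))
  exact ⟨c, hc, by rw [hceq]; congr 1; ring⟩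

lemma aux_limit {c M ε α : ℝ} (hε : 0 < ε) (hα : 0 < α)
    (h : ∀ y : ℝ, 0 < y → y < ε → |c| ≤ M * Real.sqrt (2 * y) ^ α) : c = 0 := by
  have h1 : Filter.Tendsto (fun y : ℝ => M * Real.sqrt (2 * y) ^ α)
      (nhdsWithin 0 (Ioi 0)) (nhds 0) := by
    have hs : Filter.Tendsto (fun y : ℝ => Real.sqrt (2 * y)) (nhds 0) (nhds 0) := by
      have hcont : Continuous fun y : ℝ => Real.sqrt (2 * y) :=
        Real.continuous_sqrt.comp (continuous_const.mul continuous_id)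
      simpa using hcont.tendsto 0
    have hr : Filter.Tendsto (fun t : ℝ => t ^ α) (nhds 0) (nhds 0) := by
      have := (Real.continuousAt_rpow_const 0 α (Or.inr hα.le)).tendsto
      simpa [Real.zero_rpow hα.ne'] using this
    have h2 := (hr.comp hs).const_mul M
    simpa using h2.mono_left nhdsWithin_le_nhds
  have h2 : |c| ≤ 0 := by
    refine ge_of_tendsto h1 ?_
    filter_upwards [Ioo_mem_nhdsGT_of_mem (⟨le_refl 0, hε⟩ : (0:ℝ) ∈ Ico 0 ε)] with y hy
    exact h y hy.1 hy.2
  exact abs_nonpos_iff.mp h2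
/-- if v ∈ C^{2+α}_s(𝒪 ∪ Γ₀), then the continuous extensions of
the components of y·D²v up to the degenerate boundary portion Γ₀ ⊂ {y = 0}
vanish on Γ₀. -/
theorem yD2v_vanishes_on_degenerate_boundary (𝒪 Γ₀ : Set (ℝ × ℝ)) (α : ℝ)
    (hα : 0 < α) (hα1 : α < 1)
    (h𝒪open : IsOpen 𝒪) (h𝒪H : 𝒪 ⊆ UH) (hΓ : Γ₀ ⊆ {p : ℝ × ℝ | p.2 = 0})
    (hΓint : ∀ p ∈ Γ₀, ∃ ε : ℝ, 0 < ε ∧ eBall p ε ∩ UH ⊆ 𝒪)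
    (v g1 g2 h11 h12 h22 : ℝ × ℝ → ℝ)
    (hv : ContDiffOn ℝ 2 v 𝒪)
    (hg1 : ∀ p ∈ 𝒪, g1 p = dX v p) (hg2 : ∀ p ∈ 𝒪, g2 p = dY v p)
    (hh11 : ∀ p ∈ 𝒪, h11 p = p.2 * dX (dX v) p)
    (hh12 : ∀ p ∈ 𝒪, h12 p = p.2 * dY (dX v) p)
    (hh22 : ∀ p ∈ 𝒪, h22 p = p.2 * dY (dY v) p)
    (hc : ∀ f ∈ ({g1, g2, h11, h12, h22} : Set (ℝ × ℝ → ℝ)),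
      ContinuousOn f (𝒪 ∪ Γ₀) ∧
        ∃ C : ℝ, ∀ p ∈ 𝒪 ∪ Γ₀, ∀ q ∈ 𝒪 ∪ Γ₀,
          |f p - f q| ≤ C * (cyclDist p q) ^ α) :
    ∀ p ∈ Γ₀, h11 p = 0 ∧ h12 p = 0 ∧ h22 p = 0 := by
  intro p hp
  have hp2 : p.2 = 0 := hΓ hp
  obtain ⟨ε, hε, hball⟩ := hΓint p hp
  set x := p.1 with hx
  have hpU : p ∈ 𝒪 ∪ Γ₀ := Or.inr hp
  obtain ⟨-, Cg1, hCg1⟩ := hc g1 (Set.mem_insert _ _)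
  obtain ⟨-, Cg2, hCg2⟩ := hc g2 (Set.mem_insert_of_mem _ (Set.mem_insert _ _))
  obtain ⟨-, C11, hC11⟩ := hc h11
    (Set.mem_insert_of_mem _ (Set.mem_insert_of_mem _ (Set.mem_insert _ _)))
  obtain ⟨-, C12, hC12⟩ := hc h12
    (Set.mem_insert_of_mem _ (Set.mem_insert_of_mem _ (Set.mem_insert_of_mem _ (Set.mem_insert _ _))))
  obtain ⟨-, C22, hC22⟩ := hc h22
    (Set.mem_insert_of_mem _ (Set.mem_insert_of_mem _ (Set.mem_insert_of_mem _
      (Set.mem_insert_of_mem _ (Set.mem_singleton _)))))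
  have hε2 : 0 < ε / 2 := by linarith
  -- segment membership lemmas
  have hsegH : ∀ y : ℝ, 0 < y → y < ε / 2 → ∀ t ∈ Icc x (x + y), ((t, y) : ℝ × ℝ) ∈ 𝒪 := by
    intro y hy hyε t ht
    apply hball
    refine ⟨?_, hy⟩
    show eDist (t, y) p < ε
    unfold eDist
    rw [Real.sqrt_lt' hε]
    rw [hp2, ← hx]
    nlinarith [ht.1, ht.2]
  have hsegV : ∀ y : ℝ, 0 < y → y < ε / 2 → ∀ t ∈ Icc y (2 * y), ((x, t) : ℝ × ℝ) ∈ 𝒪 := by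
    intro y hy hyε t ht
    apply hball
    refine ⟨?_, lt_of_lt_of_le hy ht.1⟩
    show eDist (x, t) p < ε
    unfold eDist
    rw [Real.sqrt_lt' hε]
    rw [hp2, ← hx]
    nlinarith [ht.1, ht.2]
  refine ⟨?_, ?_, ?_⟩
  -- h11
  · refine aux_limit (M := max C11 0 + max Cg1 0) hε2 hα (fun y hy hyε => ?_)
    obtain ⟨t, htI, hteq⟩ := mvt_horiz
      (fun q hq => deriv_diffAt h𝒪open hv (1, 0) q hq) hy (hsegH y hy hyε)
    have hteq' : dX (dX v) (t, y) = (dX v (x + y, y) - dX v (x, y)) / y := hteq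
    have htIcc := Ioo_subset_Icc_self htI
    have hpt : ((t, y) : ℝ × ℝ) ∈ 𝒪 := hsegH y hy hyε t htIcc
    have m1 : ((x + y, y) : ℝ × ℝ) ∈ 𝒪 := hsegH y hy hyε _ ⟨by linarith, le_refl _⟩
    have m2 : ((x, y) : ℝ × ℝ) ∈ 𝒪 := hsegH y hy hyε _ ⟨le_refl _, by linarith⟩
    have hval : h11 (t, y) = g1 (x + y, y) - g1 (x, y) := by
      rw [hh11 _ hpt, hg1 _ m1, hg1 _ m2]
      show y * dX (dX v) (t, y) = _
      rw [hteq']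
      field_simp
    have hb1 : |h11 (t, y)| ≤ max Cg1 0 * Real.sqrt (2 * y) ^ α := by
      rw [hval]
      refine holder_bound hα g1 _ Cg1 hCg1 (Or.inl m1) (Or.inl m2) ?_
      simp only
      rw [show x + y - x = y by ring, sub_self, abs_zero, abs_of_nonneg hy.le]
      linarith
    have hb2 : |h11 p - h11 (t, y)| ≤ max C11 0 * Real.sqrt (2 * y) ^ α := by
      refine holder_bound hα h11 _ C11 hC11 hpU (Or.inl hpt) ?_
      simp only [← hx, hp2]
      rw [abs_sub_comm, abs_of_nonneg (by linarith [htI.1] : (0:ℝ) ≤ t - x),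
        abs_of_nonpos (by linarith : (0:ℝ) - y ≤ 0)]
      have := htI.2
      linarith
    calc |h11 p| = |(h11 p - h11 (t, y)) + h11 (t, y)| := by ring_nf
      _ ≤ |h11 p - h11 (t, y)| + |h11 (t, y)| := abs_add_le _ _
      _ ≤ (max C11 0 + max Cg1 0) * Real.sqrt (2 * y) ^ α := by
          rw [add_mul]; exact add_le_add hb2 hb1
  -- h12
  · refine aux_limit (M := max C12 0 + 2 * max Cg1 0) hε2 hα (fun y hy hyε => ?_)
    obtain ⟨t, htI, hteq⟩ := mvt_vert
      (fun q hq => deriv_diffAt h𝒪open hv (1, 0) q hq) hy (hsegV y hy hyε)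
    have hteq' : dY (dX v) (x, t) = (dX v (x, 2 * y) - dX v (x, y)) / y := hteq
    have htIcc := Ioo_subset_Icc_self htI
    have hpt : ((x, t) : ℝ × ℝ) ∈ 𝒪 := hsegV y hy hyε t htIcc
    have m1 : ((x, 2 * y) : ℝ × ℝ) ∈ 𝒪 := hsegV y hy hyε _ ⟨by linarith, le_refl _⟩
    have m2 : ((x, y) : ℝ × ℝ) ∈ 𝒪 := hsegV y hy hyε _ ⟨le_refl _, by linarith⟩
    have hval : h12 (x, t) = t / y * (g1 (x, 2 * y) - g1 (x, y)) := by
      rw [hh12 _ hpt, hg1 _ m1, hg1 _ m2]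
      show t * dY (dX v) (x, t) = _
      rw [hteq']
      ring
    have hdiffb : |g1 (x, 2 * y) - g1 (x, y)| ≤ max Cg1 0 * Real.sqrt (2 * y) ^ α := by
      refine holder_bound hα g1 _ Cg1 hCg1 (Or.inl m1) (Or.inl m2) ?_
      simp only
      rw [sub_self, abs_zero, show 2 * y - y = y by ring, abs_of_nonneg hy.le]
      linarith
    have hb1 : |h12 (x, t)| ≤ 2 * (max Cg1 0 * Real.sqrt (2 * y) ^ α) := by
      rw [hval, abs_mul]
      have ht2 : |t / y| ≤ 2 := by
        rw [abs_of_nonneg (div_nonneg (by linarith [htI.1] : (0:ℝ) ≤ t) hy.le),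
          div_le_iff₀ hy]
        linarith [htI.2]
      exact mul_le_mul ht2 hdiffb (abs_nonneg _) (by norm_num)
    have hb2 : |h12 p - h12 (x, t)| ≤ max C12 0 * Real.sqrt (2 * y) ^ α := by
      refine holder_bound hα h12 _ C12 hC12 hpU (Or.inl hpt) ?_
      simp only [← hx, hp2]
      rw [sub_self, abs_zero, abs_of_nonpos (by linarith [htI.1] : (0:ℝ) - t ≤ 0)]
      linarith [htI.2]
    calc |h12 p| = |(h12 p - h12 (x, t)) + h12 (x, t)| := by ring_nf
      _ ≤ |h12 p - h12 (x, t)| + |h12 (x, t)| := abs_add_le _ _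
      _ ≤ (max C12 0 + 2 * max Cg1 0) * Real.sqrt (2 * y) ^ α := by
          rw [add_mul]
          refine add_le_add hb2 ?_
          calc |h12 (x, t)| ≤ 2 * (max Cg1 0 * Real.sqrt (2 * y) ^ α) := hb1
            _ = 2 * max Cg1 0 * Real.sqrt (2 * y) ^ α := by ring
  -- h22
  · refine aux_limit (M := max C22 0 + 2 * max Cg2 0) hε2 hα (fun y hy hyε => ?_)
    obtain ⟨t, htI, hteq⟩ := mvt_vert
      (fun q hq => deriv_diffAt h𝒪open hv (0, 1) q hq) hy (hsegV y hy hyε)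
    have hteq' : dY (dY v) (x, t) = (dY v (x, 2 * y) - dY v (x, y)) / y := hteq
    have htIcc := Ioo_subset_Icc_self htI
    have hpt : ((x, t) : ℝ × ℝ) ∈ 𝒪 := hsegV y hy hyε t htIcc
    have m1 : ((x, 2 * y) : ℝ × ℝ) ∈ 𝒪 := hsegV y hy hyε _ ⟨by linarith, le_refl _⟩
    have m2 : ((x, y) : ℝ × ℝ) ∈ 𝒪 := hsegV y hy hyε _ ⟨le_refl _, by linarith⟩
    have hval : h22 (x, t) = t / y * (g2 (x, 2 * y) - g2 (x, y)) := by
      rw [hh22 _ hpt, hg2 _ m1, hg2 _ m2]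
      show t * dY (dY v) (x, t) = _
      rw [hteq']
      ring
    have hdiffb : |g2 (x, 2 * y) - g2 (x, y)| ≤ max Cg2 0 * Real.sqrt (2 * y) ^ α := by
      refine holder_bound hα g2 _ Cg2 hCg2 (Or.inl m1) (Or.inl m2) ?_
      simp only
      rw [sub_self, abs_zero, show 2 * y - y = y by ring, abs_of_nonneg hy.le]
      linarith
    have hb1 : |h22 (x, t)| ≤ 2 * (max Cg2 0 * Real.sqrt (2 * y) ^ α) := by
      rw [hval, abs_mul]
      have ht2 : |t / y| ≤ 2 := by
        rw [abs_of_nonneg (div_nonneg (by linarith [htI.1] : (0:ℝ) ≤ t) hy.le),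
          div_le_iff₀ hy]
        linarith [htI.2]
      exact mul_le_mul ht2 hdiffb (abs_nonneg _) (by norm_num)
    have hb2 : |h22 p - h22 (x, t)| ≤ max C22 0 * Real.sqrt (2 * y) ^ α := by
      refine holder_bound hα h22 _ C22 hC22 hpU (Or.inl hpt) ?_
      simp only [← hx, hp2]
      rw [sub_self, abs_zero, abs_of_nonpos (by linarith [htI.1] : (0:ℝ) - t ≤ 0)]
      linarith [htI.2]
    calc |h22 p| = |(h22 p - h22 (x, t)) + h22 (x, t)| := by ring_nf
      _ ≤ |h22 p - h22 (x, t)| + |h22 (x, t)| := abs_add_le _ _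
      _ ≤ (max C22 0 + 2 * max Cg2 0) * Real.sqrt (2 * y) ^ α := by
          rw [add_mul]
          refine add_le_add hb2 ?_
          calc |h22 (x, t)| ≤ 2 * (max Cg2 0 * Real.sqrt (2 * y) ^ α) := hb1
            _ = 2 * max Cg2 0 * Real.sqrt (2 * y) ^ α := by ring
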